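/- Let α, β be nonzero reals with α² ≠ β² and (β − α)/(β + α) > 0. Let τ : ℤ × ℤ × ℝ² → ℝ be everywhere positive and smooth in the last two variables (y_0, y_2), and suppose τ satisfies, for all l, k ∈ ℤ and all (y_0, y_2): (i) 2α τ(l+1,k) τ(l,k) − (α+β) τ(l,k+1) τ(l+1,k−1) − (α−β) τ(l,k−1) τ(l+1,k+1) = 0, and (ii) αβ² D_{y_2}( 2α τ(l+1,k)·τ(l,k) − (α+β) τ(l,k+1)·τ(l+1,k−1) − (α−β) τ(l,k−1)·τ(l+1,k+1) ) = D_{y_0}( 2(2β²−α²) τ(l+1,k)·τ(l,k) − α(α+β) τ(l,k+1)·τ(l+1,k−1) − α(α−β) τ(l,k−1)·τ(l+1,k+1) ). Fix l ∈ ℤ and define the derivations ∂_t = (2/α²) ∂_{y_0} − 2 ∂_{y_2} and ∂_x = ∂_{y_2} − (1/β²) ∂_{y_0}, and the functions u_k = log[ ((β−α)/(β+α))^{1/2} τ(l+1,k+1) τ(l,k) / (τ(l,k+1) τ(l+1,k)) ] and v_k = ∂_x log( τ(l,k+2)/τ(l,k) ). Assume moreover that u_{k+1}(y_0,y_2) +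 u_k(y_0,y_2) ≠ 0 for all k ∈ ℤ and all (y_0, y_2). Then for all k and (y_0, y_2): ∂_t u_k = Δ_{−k}( ∂_x u_{k+1} / (1 − exp(−u_{k+1} − u_k)) − ∂_x u_k / (1 − exp(u_{k+1} + u_k)) − [ (1 + exp(u_{k+1} + u_k)) / (1 − exp(u_{k+1} + u_k)) ] v_k ), where Δ_{−k} F_k := F_k − F_{k−1} is the backward difference in the discrete index k. -/

import Mathlib

set_option maxHeartbeats 2000000


noncomputable section

/-- Partial derivative in the first variable `y₀`. -/
def Py0 (F : ℝ → ℝ → ℝ) (y0 y2 : ℝ) : ℝ := deriv (fun s => F s y2) y0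

/-- Partial derivative in the second variable `y₂`. -/
def Py2 (F : ℝ → ℝ → ℝ) (y0 y2 : ℝ) : ℝ := deriv (fun s => F y0 s) y2

/-- The derivation `∂_x = ∂_{y₂} − (1/β²) ∂_{y₀}`. -/
def Px (β : ℝ) (F : ℝ → ℝ → ℝ) (y0 y2 : ℝ) : ℝ :=
  Py2 F y0 y2 - (1 / β ^ 2) * Py0 F y0 y2

/-- The derivation `∂_t = (2/α²) ∂_{y₀} − 2 ∂_{y₂}`. -/
def Pt (α : ℝ) (F : ℝ → ℝ → ℝ) (y0 y2 : ℝ) : ℝ :=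
  (2 / α ^ 2) * Py0 F y0 y2 - 2 * Py2 F y0 y2

/-- Hirota bilinear operator in `y₀`: `D_{y₀} f·g = (∂_{y₀}f) g − f (∂_{y₀}g)`. -/
def Dy0 (f g : ℝ → ℝ → ℝ) (y0 y2 : ℝ) : ℝ :=
  Py0 f y0 y2 * g y0 y2 - f y0 y2 * Py0 g y0 y2

/-- Hirota bilinear operator in `y₂`: `D_{y₂} f·g = (∂_{y₂}f) g − f (∂_{y₂}g)`. -/
def Dy2 (f g : ℝ → ℝ → ℝ) (y0 y2 : ℝ) : ℝ :=
  Py2 f y0 y2 * g y0 y2 - f y0 y2 * Py2 g y0 y2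

/-- `u_k = log[ ((β−α)/(β+α))^{1/2} τ(l+1,k+1) τ(l,k) / (τ(l,k+1) τ(l+1,k)) ]`. -/
def uS (τ : ℤ → ℤ → ℝ → ℝ → ℝ) (α β : ℝ) (l k : ℤ) (y0 y2 : ℝ) : ℝ :=
  Real.log (Real.sqrt ((β - α) / (β + α)) *
    (τ (l + 1) (k + 1) y0 y2 * τ l k y0 y2) / (τ l (k + 1) y0 y2 * τ (l + 1) k y0 y2))

/-- `v_k = ∂_x log( τ(l,k+2)/τ(l,k) )`. -/
def vS (τ : ℤ → ℤ → ℝ → ℝ → ℝ) (β : ℝ) (l k : ℤ) (y0 y2 : ℝ) : ℝ :=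
  Px β (fun a b => Real.log (τ l (k + 2) a b / τ l k a b)) y0 y2

/-- The bracketed expression on the right-hand side of the first equation of the
differential-difference system, as a function of the discrete index `k`. -/
def rhsBracket (τ : ℤ → ℤ → ℝ → ℝ → ℝ) (α β : ℝ) (l k : ℤ) (y0 y2 : ℝ) : ℝ :=
  Px β (uS τ α β l (k + 1)) y0 y2 /
      (1 - Real.exp (-uS τ α β l (k + 1) y0 y2 - uS τ α β l k y0 y2)) -
    Px β (uS τ α β l k) y0 y2 /
      (1 - Real.exp (uS τ α β l (k + 1) y0 y2 + uS τ α β l k y0 y2)) -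
    ((1 + Real.exp (uS τ α β l (k + 1) y0 y2 + uS τ α β l k y0 y2)) /
      (1 - Real.exp (uS τ α β l (k + 1) y0 y2 + uS τ α β l k y0 y2))) *
      vS τ β l k y0 y2

lemma hasDerivAt_y0 (F : ℝ → ℝ → ℝ)
    (hF : ContDiff ℝ (⊤ : ℕ∞) (fun q : ℝ × ℝ => F q.1 q.2)) (y0 y2 : ℝ) :
    HasDerivAt (fun s => F s y2) (Py0 F y0 y2) y0 := by
  have h1 : DifferentiableAt ℝ (fun q : ℝ × ℝ => F q.1 q.2) (y0, y2) :=
    (hF.differentiable (by simp)).differentiableAt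
  have h2 : DifferentiableAt ℝ (fun s : ℝ => F s y2) y0 := by
    have h3 : DifferentiableAt ℝ (fun s : ℝ => (s, y2)) y0 :=
      DifferentiableAt.prodMk differentiableAt_id (differentiableAt_const y2)
    have := h1.comp y0 h3
    exact this
  exact h2.hasDerivAt

lemma hasDerivAt_y2 (F : ℝ → ℝ → ℝ)
    (hF : ContDiff ℝ (⊤ : ℕ∞) (fun q : ℝ × ℝ => F q.1 q.2)) (y0 y2 : ℝ) :
    HasDerivAt (fun s => F y0 s) (Py2 F y0 y2) y2 := by
  have h1 : DifferentiableAt ℝ (fun q : ℝ × ℝ => F q.1 q.2) (y0, y2) :=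
    (hF.differentiable (by simp)).differentiableAt
  have h2 : DifferentiableAt ℝ (fun s : ℝ => F y0 s) y2 := by
    have h3 : DifferentiableAt ℝ (fun s : ℝ => (y0, s)) y2 :=
      DifferentiableAt.prodMk (differentiableAt_const y0) differentiableAt_id
    have := h1.comp y2 h3
    exact this
  exact h2.hasDerivAt

lemma deriv_log_quad {f g h i : ℝ → ℝ} {f' g' h' i' : ℝ} {x c : ℝ} (hc : 0 < c)
    (Hf : HasDerivAt f f' x) (Hg : HasDerivAt g g' x) (Hh : HasDerivAt h h' x)
    (Hi : HasDerivAt i i' x) (hf : ∀ s, 0 < f s) (hg : ∀ s, 0 < g s)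
    (hh : ∀ s, 0 < h s) (hi : ∀ s, 0 < i s) :
    deriv (fun s => Real.log (c * (f s * g s) / (h s * i s))) x
      = f' / f x + g' / g x - h' / h x - i' / i x := by
  have hfun : (fun s => Real.log (c * (f s * g s) / (h s * i s)))
      = fun s => Real.log c + Real.log (f s) + Real.log (g s)
          - Real.log (h s) - Real.log (i s) := by
    funext s
    rw [Real.log_div (mul_pos hc (mul_pos (hf s) (hg s))).ne'
        (mul_pos (hh s) (hi s)).ne',
      Real.log_mul hc.ne' (mul_pos (hf s) (hg s)).ne',
      Real.log_mul (hf s).ne' (hg s).ne',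
      Real.log_mul (hh s).ne' (hi s).ne']
    ring
  rw [hfun]
  have H : HasDerivAt (fun s => Real.log c + Real.log (f s) + Real.log (g s)
      - Real.log (h s) - Real.log (i s))
      (0 + f' / f x + g' / g x - h' / h x - i' / i x) x :=
    (((((hasDerivAt_const x (Real.log c)).add (Hf.log (hf x).ne')).add
      (Hg.log (hg x).ne')).sub (Hh.log (hh x).ne')).sub (Hi.log (hi x).ne'))
  rw [H.deriv]; ring

lemma deriv_log_ratio {f g : ℝ → ℝ} {f' g' : ℝ} {x : ℝ}
    (Hf : HasDerivAt f f' x) (Hg : HasDerivAt g g' x)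
    (hf : ∀ s, 0 < f s) (hg : ∀ s, 0 < g s) :
    deriv (fun s => Real.log (f s / g s)) x = f' / f x - g' / g x := by
  have hfun : (fun s => Real.log (f s / g s))
      = fun s => Real.log (f s) - Real.log (g s) := by
    funext s; rw [Real.log_div (hf s).ne' (hg s).ne']
  rw [hfun]
  have H : HasDerivAt (fun s => Real.log (f s) - Real.log (g s))
      (f' / f x - g' / g x) x := (Hf.log (hf x).ne').sub (Hg.log (hg x).ne')
  rw [H.deriv]


lemma keyAlg (α β t00 t01 t02 t10 t11 t12 a00 a01 a02 a10 a11 a12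
    b00 b01 b02 b10 b11 b12 : ℝ)
    (hα : α ≠ 0) (hβ : β ≠ 0) (hp : α + β ≠ 0) (hm : α - β ≠ 0)
    (hbp : β + α ≠ 0) (hbm : β - α ≠ 0)
    (h00 : t00 ≠ 0) (h01 : t01 ≠ 0) (h02 : t02 ≠ 0)
    (h10 : t10 ≠ 0) (h11 : t11 ≠ 0) (h12 : t12 ≠ 0)
    (hE1 : 2 * α * t11 * t01 - (α + β) * t02 * t10 - (α - β) * t00 * t12 = 0)
    (hE2 : α * β ^ 2 *
        (2 * α * (b11 * t01 - t11 * b01) - (α + β) * (b02 * t10 - t02 * b10)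
          - (α - β) * (b00 * t12 - t00 * b12))
      = 2 * (2 * β ^ 2 - α ^ 2) * (a11 * t01 - t11 * a01)
          - α * (α + β) * (a02 * t10 - t02 * a10)
          - α * (α - β) * (a00 * t12 - t00 * a12)) :
    ((b12 / t12 + b01 / t01 - b02 / t02 - b11 / t11)
        - 1 / β ^ 2 * (a12 / t12 + a01 / t01 - a02 / t02 - a11 / t11)) /
      (1 - ((β - α) / (β + α) * (t12 * t00) / (t02 * t10))⁻¹)
    - ((b11 / t11 + b00 / t00 - b01 / t01 - b10 / t10)
        - 1 / β ^ 2 * (a11 / t11 + a00 / t00 - a01 / t01 - a10 / t10)) /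
      (1 - (β - α) / (β + α) * (t12 * t00) / (t02 * t10))
    - ((1 + (β - α) / (β + α) * (t12 * t00) / (t02 * t10)) /
        (1 - (β - α) / (β + α) * (t12 * t00) / (t02 * t10))) *
      ((b02 / t02 - b00 / t00) - 1 / β ^ 2 * (a02 / t02 - a00 / t00))
    = 2 * (β ^ 2 - α ^ 2) / (α ^ 2 * β ^ 2) * (a11 / t11 - a01 / t01)
      - 2 * ((b11 / t11 - 1 / β ^ 2 * (a11 / t11))
              - (b01 / t01 - 1 / β ^ 2 * (a01 / t01))) := by
  have hd2 : (1 : ℝ) - (β - α) / (β + α) * (t12 * t00) / (t02 * t10)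
      = 2 * α * (t11 * t01) / ((α + β) * (t02 * t10)) := by
    field_simp
    linear_combination (-(α+β)) * hE1
  have hd1 : (1 : ℝ) - ((β - α) / (β + α) * (t12 * t00) / (t02 * t10))⁻¹
      = 2 * α * (t11 * t01) / ((α - β) * (t12 * t00)) := by
    field_simp
    linear_combination (-(β-α)) * hE1
  have hd3 : (1 : ℝ) + (β - α) / (β + α) * (t12 * t00) / (t02 * t10)
      = (2 * (α + β) * (t02 * t10) - 2 * α * (t11 * t01)) / ((α + β) * (t02 * t10)) := by
    field_simp
    linear_combination (α+β) * hE1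
  rw [hd1, hd2, hd3]
  have hR : 2 * α * (t11 * t01) ≠ 0 := by
    simp [hα, h11, h01]
  linear_combination (norm := (field_simp; ring1))
    (1 / (2 * α ^ 2 * β ^ 2 * (t11 * t01))) * hE2
    + (((b02 / t02 - b00 / t00) - 1 / β ^ 2 * (a02 / t02 - a00 / t00))
        / (2 * α * (t11 * t01))) * hE1
    + (((b11 / t11 - b01 / t01) - 1 / β ^ 2 * (a11 / t11 - a01 / t01))
        / (2 * α * (t11 * t01))) * hE1


variable (τ : ℤ → ℤ → ℝ → ℝ → ℝ) (α β : ℝ)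

lemma Py0_uS_eq (hquot : 0 < (β - α) / (β + α))
    (hτpos : ∀ l k y0 y2, 0 < τ l k y0 y2)
    (hτsmooth : ∀ l k, ContDiff ℝ (⊤ : ℕ∞) (fun q : ℝ × ℝ => τ l k q.1 q.2))
    (l j : ℤ) (y0 y2 : ℝ) :
    Py0 (uS τ α β l j) y0 y2 =
      Py0 (τ (l+1) (j+1)) y0 y2 / τ (l+1) (j+1) y0 y2
      + Py0 (τ l j) y0 y2 / τ l j y0 y2
      - Py0 (τ l (j+1)) y0 y2 / τ l (j+1) y0 y2
      - Py0 (τ (l+1) j) y0 y2 / τ (l+1) j y0 y2 := by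
  have hs : 0 < Real.sqrt ((β - α) / (β + α)) := Real.sqrt_pos.mpr hquot
  show deriv (fun s => uS τ α β l j s y2) y0 = _
  simp only [uS]
  exact deriv_log_quad hs
    (hasDerivAt_y0 (τ (l+1) (j+1)) (hτsmooth _ _) y0 y2)
    (hasDerivAt_y0 (τ l j) (hτsmooth _ _) y0 y2)
    (hasDerivAt_y0 (τ l (j+1)) (hτsmooth _ _) y0 y2)
    (hasDerivAt_y0 (τ (l+1) j) (hτsmooth _ _) y0 y2)
    (fun s => hτpos _ _ s y2) (fun s => hτpos _ _ s y2)
    (fun s => hτpos _ _ s y2) (fun s => hτpos _ _ s y2)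

lemma Py2_uS_eq (hquot : 0 < (β - α) / (β + α))
    (hτpos : ∀ l k y0 y2, 0 < τ l k y0 y2)
    (hτsmooth : ∀ l k, ContDiff ℝ (⊤ : ℕ∞) (fun q : ℝ × ℝ => τ l k q.1 q.2))
    (l j : ℤ) (y0 y2 : ℝ) :
    Py2 (uS τ α β l j) y0 y2 =
      Py2 (τ (l+1) (j+1)) y0 y2 / τ (l+1) (j+1) y0 y2
      + Py2 (τ l j) y0 y2 / τ l j y0 y2
      - Py2 (τ l (j+1)) y0 y2 / τ l (j+1) y0 y2
      - Py2 (τ (l+1) j) y0 y2 / τ (l+1) j y0 y2 := by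
  have hs : 0 < Real.sqrt ((β - α) / (β + α)) := Real.sqrt_pos.mpr hquot
  show deriv (fun s => uS τ α β l j y0 s) y2 = _
  simp only [uS]
  exact deriv_log_quad hs
    (hasDerivAt_y2 (τ (l+1) (j+1)) (hτsmooth _ _) y0 y2)
    (hasDerivAt_y2 (τ l j) (hτsmooth _ _) y0 y2)
    (hasDerivAt_y2 (τ l (j+1)) (hτsmooth _ _) y0 y2)
    (hasDerivAt_y2 (τ (l+1) j) (hτsmooth _ _) y0 y2)
    (fun s => hτpos _ _ y0 s) (fun s => hτpos _ _ y0 s)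
    (fun s => hτpos _ _ y0 s) (fun s => hτpos _ _ y0 s)

lemma Px_uS_eq (hquot : 0 < (β - α) / (β + α))
    (hτpos : ∀ l k y0 y2, 0 < τ l k y0 y2)
    (hτsmooth : ∀ l k, ContDiff ℝ (⊤ : ℕ∞) (fun q : ℝ × ℝ => τ l k q.1 q.2))
    (l j : ℤ) (y0 y2 : ℝ) :
    Px β (uS τ α β l j) y0 y2 =
      (Py2 (τ (l+1) (j+1)) y0 y2 / τ (l+1) (j+1) y0 y2
       + Py2 (τ l j) y0 y2 / τ l j y0 y2
       - Py2 (τ l (j+1)) y0 y2 / τ l (j+1) y0 y2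
       - Py2 (τ (l+1) j) y0 y2 / τ (l+1) j y0 y2)
      - 1 / β ^ 2 *
      (Py0 (τ (l+1) (j+1)) y0 y2 / τ (l+1) (j+1) y0 y2
       + Py0 (τ l j) y0 y2 / τ l j y0 y2
       - Py0 (τ l (j+1)) y0 y2 / τ l (j+1) y0 y2
       - Py0 (τ (l+1) j) y0 y2 / τ (l+1) j y0 y2) := by
  rw [Px, Py0_uS_eq τ α β hquot hτpos hτsmooth l j y0 y2,
    Py2_uS_eq τ α β hquot hτpos hτsmooth l j y0 y2]

lemma vS_eq (hτpos : ∀ l k y0 y2, 0 < τ l k y0 y2)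
    (hτsmooth : ∀ l k, ContDiff ℝ (⊤ : ℕ∞) (fun q : ℝ × ℝ => τ l k q.1 q.2))
    (l j : ℤ) (y0 y2 : ℝ) :
    vS τ β l j y0 y2 =
      (Py2 (τ l (j+2)) y0 y2 / τ l (j+2) y0 y2 - Py2 (τ l j) y0 y2 / τ l j y0 y2)
      - 1 / β ^ 2 *
      (Py0 (τ l (j+2)) y0 y2 / τ l (j+2) y0 y2 - Py0 (τ l j) y0 y2 / τ l j y0 y2) := by
  rw [vS, Px]
  have h0 : Py0 (fun a b => Real.log (τ l (j + 2) a b / τ l j a b)) y0 y2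
      = Py0 (τ l (j+2)) y0 y2 / τ l (j+2) y0 y2 - Py0 (τ l j) y0 y2 / τ l j y0 y2 := by
    show deriv (fun s => Real.log (τ l (j+2) s y2 / τ l j s y2)) y0 = _
    exact deriv_log_ratio (hasDerivAt_y0 (τ l (j+2)) (hτsmooth _ _) y0 y2)
      (hasDerivAt_y0 (τ l j) (hτsmooth _ _) y0 y2)
      (fun s => hτpos _ _ s y2) (fun s => hτpos _ _ s y2)
  have h2 : Py2 (fun a b => Real.log (τ l (j + 2) a b / τ l j a b)) y0 y2
      = Py2 (τ l (j+2)) y0 y2 / τ l (j+2) y0 y2 - Py2 (τ l j) y0 y2 / τ l j y0 y2 := by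
    show deriv (fun s => Real.log (τ l (j+2) y0 s / τ l j y0 s)) y2 = _
    exact deriv_log_ratio (hasDerivAt_y2 (τ l (j+2)) (hτsmooth _ _) y0 y2)
      (hasDerivAt_y2 (τ l j) (hτsmooth _ _) y0 y2)
      (fun s => hτpos _ _ y0 s) (fun s => hτpos _ _ y0 s)
  rw [h0, h2]

lemma exp_uS_pair (hquot : 0 < (β - α) / (β + α))
    (hτpos : ∀ l k y0 y2, 0 < τ l k y0 y2)
    (l j : ℤ) (y0 y2 : ℝ) :
    Real.exp (uS τ α β l (j+1) y0 y2 + uS τ α β l j y0 y2)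
      = (β - α) / (β + α) * (τ (l+1) (j+1+1) y0 y2 * τ l j y0 y2)
        / (τ l (j+1+1) y0 y2 * τ (l+1) j y0 y2) := by
  have hs : 0 < Real.sqrt ((β - α) / (β + α)) := Real.sqrt_pos.mpr hquot
  have hpos : ∀ (m : ℤ), 0 < Real.sqrt ((β - α) / (β + α)) *
      (τ (l+1) (m+1) y0 y2 * τ l m y0 y2) / (τ l (m+1) y0 y2 * τ (l+1) m y0 y2) := by
    intro m
    have := hτpos (l+1) (m+1) y0 y2
    have := hτpos l m y0 y2
    have := hτpos l (m+1) y0 y2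
    have := hτpos (l+1) m y0 y2
    positivity
  rw [Real.exp_add]
  simp only [uS]
  rw [Real.exp_log (hpos (j+1)), Real.exp_log (hpos j)]
  have hss : Real.sqrt ((β - α) / (β + α)) * Real.sqrt ((β - α) / (β + α))
      = (β - α) / (β + α) := Real.mul_self_sqrt hquot.le
  have hbp : β + α ≠ 0 := by
    intro h; rw [h, div_zero] at hquot; exact lt_irrefl 0 hquot
  have n1 := (hτpos (l+1) (j+1+1) y0 y2).ne'
  have n2 := (hτpos l (j+1) y0 y2).ne'
  have n3 := (hτpos l (j+1+1) y0 y2).ne'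
  have n4 := (hτpos (l+1) (j+1) y0 y2).ne'
  have n5 := (hτpos (l+1) j y0 y2).ne'
  have n6 := (hτpos l j y0 y2).ne'
  calc Real.sqrt ((β - α) / (β + α)) * (τ (l+1) (j+1+1) y0 y2 * τ l (j+1) y0 y2)
        / (τ l (j+1+1) y0 y2 * τ (l+1) (j+1) y0 y2) *
      (Real.sqrt ((β - α) / (β + α)) * (τ (l+1) (j+1) y0 y2 * τ l j y0 y2)
        / (τ l (j+1) y0 y2 * τ (l+1) j y0 y2))
      = (Real.sqrt ((β - α) / (β + α)) * Real.sqrt ((β - α) / (β + α))) *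
        ((τ (l+1) (j+1+1) y0 y2 * τ l (j+1) y0 y2 * (τ (l+1) (j+1) y0 y2 * τ l j y0 y2))
         / (τ l (j+1+1) y0 y2 * τ (l+1) (j+1) y0 y2 * (τ l (j+1) y0 y2 * τ (l+1) j y0 y2))) := by
        ring
    _ = (β - α) / (β + α) *
        ((τ (l+1) (j+1+1) y0 y2 * τ l (j+1) y0 y2 * (τ (l+1) (j+1) y0 y2 * τ l j y0 y2))
         / (τ l (j+1+1) y0 y2 * τ (l+1) (j+1) y0 y2 * (τ l (j+1) y0 y2 * τ (l+1) j y0 y2))) := by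
        rw [hss]
    _ = (β - α) / (β + α) * (τ (l+1) (j+1+1) y0 y2 * τ l j y0 y2)
        / (τ l (j+1+1) y0 y2 * τ (l+1) j y0 y2) := by
        field_simp


variable {τ} {α β}


/-- derivation of the first equation of the differential-difference system
from the two bilinear equations:
`∂_t u_k = Δ_{−k}( ∂_x u_{k+1}/(1−e^{−u_{k+1}−u_k}) − ∂_x u_k/(1−e^{u_{k+1}+u_k})
            − (1+e^{u_{k+1}+u_k})/(1−e^{u_{k+1}+u_k}) v_k )`. -/
theorem DDeq1_from_bilinear (α β : ℝ) (hα : α ≠ 0) (hβ : β ≠ 0)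
    (hαβ : α ^ 2 ≠ β ^ 2) (hquot : 0 < (β - α) / (β + α))
    (τ : ℤ → ℤ → ℝ → ℝ → ℝ)
    (hτpos : ∀ l k y0 y2, 0 < τ l k y0 y2)
    (hτsmooth : ∀ l k, ContDiff ℝ (⊤ : ℕ∞) (fun q : ℝ × ℝ => τ l k q.1 q.2))
    (hbil1 : ∀ (l k : ℤ) (y0 y2 : ℝ),
      2 * α * τ (l + 1) k y0 y2 * τ l k y0 y2 -
        (α + β) * τ l (k + 1) y0 y2 * τ (l + 1) (k - 1) y0 y2 -
        (α - β) * τ l (k - 1) y0 y2 * τ (l + 1) (k + 1) y0 y2 = 0)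
    (hbil2 : ∀ (l k : ℤ) (y0 y2 : ℝ),
      α * β ^ 2 *
        (2 * α * Dy2 (τ (l + 1) k) (τ l k) y0 y2 -
          (α + β) * Dy2 (τ l (k + 1)) (τ (l + 1) (k - 1)) y0 y2 -
          (α - β) * Dy2 (τ l (k - 1)) (τ (l + 1) (k + 1)) y0 y2)
      = 2 * (2 * β ^ 2 - α ^ 2) * Dy0 (τ (l + 1) k) (τ l k) y0 y2 -
          α * (α + β) * Dy0 (τ l (k + 1)) (τ (l + 1) (k - 1)) y0 y2 -
          α * (α - β) * Dy0 (τ l (k - 1)) (τ (l + 1) (k + 1)) y0 y2)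
    (l : ℤ)
    (hune : ∀ (k : ℤ) (y0 y2 : ℝ),
      uS τ α β l (k + 1) y0 y2 + uS τ α β l k y0 y2 ≠ 0) :
    ∀ (k : ℤ) (y0 y2 : ℝ),
      Pt α (uS τ α β l k) y0 y2 =
        rhsBracket τ α β l k y0 y2 - rhsBracket τ α β l (k - 1) y0 y2 := by
  intro k y0 y2
  have hbp : β + α ≠ 0 := by
    intro h; rw [h, div_zero] at hquot; exact lt_irrefl 0 hquot
  have hbm : β - α ≠ 0 := by
    intro h; rw [h, zero_div] at hquot; exact lt_irrefl 0 hquot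
  have hp : α + β ≠ 0 := by intro h; exact hbp (by linarith)
  have hm : α - β ≠ 0 := by intro h; exact hbm (by linarith)
  -- nonvanishing of τ values
  have nt : ∀ (m j : ℤ), τ m j y0 y2 ≠ 0 := fun m j => (hτpos m j y0 y2).ne'
  -- derivative formulas
  have hPx1 := Px_uS_eq τ α β hquot hτpos hτsmooth l (k+1) y0 y2
  rw [show k+1+1 = k+2 from by ring] at hPx1
  have hPx0 := Px_uS_eq τ α β hquot hτpos hτsmooth l k y0 y2
  have hPxm := Px_uS_eq τ α β hquot hτpos hτsmooth l (k-1) y0 y2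
  rw [show k-1+1 = k from by ring] at hPxm
  have hV0 := vS_eq τ β hτpos hτsmooth l k y0 y2
  have hVm := vS_eq τ β hτpos hτsmooth l (k-1) y0 y2
  rw [show k-1+2 = k+1 from by ring] at hVm
  have hPy0 := Py0_uS_eq τ α β hquot hτpos hτsmooth l k y0 y2
  have hPy2 := Py2_uS_eq τ α β hquot hτpos hτsmooth l k y0 y2
  -- exponential formulas
  have hEx1 := exp_uS_pair τ α β hquot hτpos l k y0 y2
  rw [show k+1+1 = k+2 from by ring] at hEx1
  have hExm := exp_uS_pair τ α β hquot hτpos l (k-1) y0 y2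
  rw [show k-1+1 = k from by ring] at hExm
  have hExn1 : Real.exp (-uS τ α β l (k+1) y0 y2 - uS τ α β l k y0 y2)
      = ((β - α) / (β + α) * (τ (l+1) (k+2) y0 y2 * τ l k y0 y2)
        / (τ l (k+2) y0 y2 * τ (l+1) k y0 y2))⁻¹ := by
    rw [show -uS τ α β l (k+1) y0 y2 - uS τ α β l k y0 y2
        = -(uS τ α β l (k+1) y0 y2 + uS τ α β l k y0 y2) from by ring,
      Real.exp_neg, hEx1]
  have hExnm : Real.exp (-uS τ α β l k y0 y2 - uS τ α β l (k-1) y0 y2)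
      = ((β - α) / (β + α) * (τ (l+1) (k+1) y0 y2 * τ l (k-1) y0 y2)
        / (τ l (k+1) y0 y2 * τ (l+1) (k-1) y0 y2))⁻¹ := by
    rw [show -uS τ α β l k y0 y2 - uS τ α β l (k-1) y0 y2
        = -(uS τ α β l k y0 y2 + uS τ α β l (k-1) y0 y2) from by ring,
      Real.exp_neg, hExm]
  -- the bilinear equations at centers k+1 and k
  have hb11 := hbil1 l (k+1) y0 y2
  rw [show k+1+1 = k+2 from by ring, show k+1-1 = k from by ring] at hb11
  have hb10 := hbil1 l k y0 y2
  have hb21 := hbil2 l (k+1) y0 y2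
  simp only [Dy0, Dy2] at hb21
  rw [show k+1+1 = k+2 from by ring, show k+1-1 = k from by ring] at hb21
  have hb20 := hbil2 l k y0 y2
  simp only [Dy0, Dy2] at hb20
  -- apply the key algebraic lemma at both centers
  have K1 := keyAlg α β (τ l k y0 y2) (τ l (k+1) y0 y2) (τ l (k+2) y0 y2)
    (τ (l+1) k y0 y2) (τ (l+1) (k+1) y0 y2) (τ (l+1) (k+2) y0 y2)
    (Py0 (τ l k) y0 y2) (Py0 (τ l (k+1)) y0 y2) (Py0 (τ l (k+2)) y0 y2)
    (Py0 (τ (l+1) k) y0 y2) (Py0 (τ (l+1) (k+1)) y0 y2) (Py0 (τ (l+1) (k+2)) y0 y2)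
    (Py2 (τ l k) y0 y2) (Py2 (τ l (k+1)) y0 y2) (Py2 (τ l (k+2)) y0 y2)
    (Py2 (τ (l+1) k) y0 y2) (Py2 (τ (l+1) (k+1)) y0 y2) (Py2 (τ (l+1) (k+2)) y0 y2)
    hα hβ hp hm hbp hbm (nt _ _) (nt _ _) (nt _ _) (nt _ _) (nt _ _) (nt _ _)
    (by linear_combination hb11) (by linear_combination hb21)
  have K0 := keyAlg α β (τ l (k-1) y0 y2) (τ l k y0 y2) (τ l (k+1) y0 y2)
    (τ (l+1) (k-1) y0 y2) (τ (l+1) k y0 y2) (τ (l+1) (k+1) y0 y2)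
    (Py0 (τ l (k-1)) y0 y2) (Py0 (τ l k) y0 y2) (Py0 (τ l (k+1)) y0 y2)
    (Py0 (τ (l+1) (k-1)) y0 y2) (Py0 (τ (l+1) k) y0 y2) (Py0 (τ (l+1) (k+1)) y0 y2)
    (Py2 (τ l (k-1)) y0 y2) (Py2 (τ l k) y0 y2) (Py2 (τ l (k+1)) y0 y2)
    (Py2 (τ (l+1) (k-1)) y0 y2) (Py2 (τ (l+1) k) y0 y2) (Py2 (τ (l+1) (k+1)) y0 y2)
    hα hβ hp hm hbp hbm (nt _ _) (nt _ _) (nt _ _) (nt _ _) (nt _ _) (nt _ _)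
    (by linear_combination hb10) (by linear_combination hb20)
  simp only [rhsBracket, Pt]
  rw [show k-1+1 = k from by ring]
  rw [hPx1, hPx0, hPxm, hV0, hVm, hEx1, hExm, hExn1, hExnm, hPy0, hPy2]
  have n00 := nt l (k-1); have n01 := nt l k; have n02 := nt l (k+1)
  have n03 := nt l (k+2); have n10 := nt (l+1) (k-1); have n11 := nt (l+1) k
  have n12 := nt (l+1) (k+1); have n13 := nt (l+1) (k+2)
  rw [K1, K0]
  field_simp
  ring
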